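/- Let n ≥ 2 be a natural number, p ∈ [0,1] a real, and t ≥ 1 a natural number such that (2t−1 : ℝ) > (n−1)·p + √((n−1)·log(n−1)). Then Σ_{k=2t−1}^{n−1} ((n−1) choose k) · p^k · (1−p)^{n−1−k} ≤ 1/(n−1)². -/

import Mathlib

open Real

lemma bern_mgf_le (p : ℝ) (hp0 : 0 ≤ p) (hp1 : p ≤ 1) (x : ℝ) (hx : 0 ≤ x) :
    p * Real.exp ((1-p)*x) + (1-p) * Real.exp (-(p*x)) ≤ Real.exp (x^2/8) := by
  have hq0 : (0:ℝ) ≤ 1 - p := by linarith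
  -- D = denominator, N = D'
  set D : ℝ → ℝ := fun y => p * Real.exp ((1-p)*y) + (1-p) * Real.exp (-(p*y)) with hDdef
  set N : ℝ → ℝ := fun y => p*(1-p)*(Real.exp ((1-p)*y) - Real.exp (-(p*y))) with hNdef
  have hDpos : ∀ y, 0 < D y := by
    intro y
    have h2 : 0 ≤ (1-p) * Real.exp (-(p*y)) := mul_nonneg hq0 (Real.exp_pos _).le
    rcases eq_or_lt_of_le hp0 with h | h
    · simp only [hDdef, ← h]
      norm_num [Real.exp_pos]
    · exact add_pos_of_pos_of_nonneg (mul_pos h (Real.exp_pos _)) h2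
  have hqy : ∀ y : ℝ, HasDerivAt (fun z : ℝ => (1-p) * z) (1-p) y := by
    intro y; simpa using (hasDerivAt_id y).const_mul (1-p)
  have hpy : ∀ y : ℝ, HasDerivAt (fun z : ℝ => -(p * z)) (-p) y := by
    intro y; exact ((hasDerivAt_id y).const_mul p).neg.congr_deriv (by ring)
  have hD' : ∀ y, HasDerivAt D (N y) y := by
    intro y
    have := (((hqy y).exp).const_mul p).add (((hpy y).exp).const_mul (1-p))
    exact this.congr_deriv (by simp only [hNdef]; ring)
  have hN' : ∀ y, HasDerivAt N
      (p*(1-p)*((1-p)*Real.exp ((1-p)*y) + p*Real.exp (-(p*y)))) y := by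
    intro y
    have := (((hqy y).exp).sub ((hpy y).exp)).const_mul (p*(1-p))
    exact this.congr_deriv (by ring)
  -- g := fun y => y/4 - N y / D y has nonneg derivative
  set g : ℝ → ℝ := fun y => y/4 - N y / D y with hgdef
  have hg' : ∀ y, HasDerivAt g
      (1/4 - ((p*(1-p)*((1-p)*Real.exp ((1-p)*y) + p*Real.exp (-(p*y)))) * D y - N y * N y) / (D y)^2) y := by
    intro y
    exact ((hasDerivAt_id y).div_const 4).sub ((hN' y).div (hD' y) (hDpos y).ne')
  have hg'nn : ∀ y, 0 ≤ 1/4 - ((p*(1-p)*((1-p)*Real.exp ((1-p)*y) + p*Real.exp (-(p*y)))) * D y - N y * N y) / (D y)^2 := by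
    intro y
    have hD2 : (0:ℝ) < (D y)^2 := pow_pos (hDpos y) 2
    have hE : (p*(1-p)*((1-p)*Real.exp ((1-p)*y) + p*Real.exp (-(p*y)))) * D y - N y * N y ≤ (D y)^2 / 4 := by
      simp only [hDdef, hNdef]
      nlinarith [sq_nonneg (p * Real.exp ((1-p)*y) - (1-p) * Real.exp (-(p*y)))]
    have : ((p*(1-p)*((1-p)*Real.exp ((1-p)*y) + p*Real.exp (-(p*y)))) * D y - N y * N y) / (D y)^2 ≤ 1/4 := by
      rw [div_le_iff₀ hD2]; linarith
    linarith
  have hgmono : Monotone g :=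
    monotone_of_deriv_nonneg (fun y => (hg' y).differentiableAt)
      (fun y => by rw [(hg' y).deriv]; exact hg'nn y)
  have hg0 : g 0 = 0 := by
    simp [hgdef, hNdef]
  have hgnn : ∀ y, 0 ≤ y → 0 ≤ g y := fun y hy => hg0 ▸ hgmono hy
  -- h := fun y => y^2/8 - log (D y)
  set h : ℝ → ℝ := fun y => y^2/8 - Real.log (D y) with hhdef
  have hh' : ∀ y, HasDerivAt h (g y) y := by
    intro y
    have h1 : HasDerivAt (fun z : ℝ => z^2/8) ((2:ℕ) * y^1 / 8) y :=
      (hasDerivAt_pow 2 y).div_const 8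
    have h2 : HasDerivAt (fun z => Real.log (D z)) (N y / D y) y :=
      (hD' y).log (hDpos y).ne'
    have := h1.sub h2
    exact this.congr_deriv (by simp only [hgdef]; push_cast; ring)
  have hhmono : MonotoneOn h (Set.Ici 0) := by
    apply monotoneOn_of_deriv_nonneg (convex_Ici 0)
    · exact fun y _ => (hh' y).differentiableAt.continuousAt.continuousWithinAt
    · exact fun y _ => (hh' y).differentiableAt.differentiableWithinAt
    · intro y hy
      rw [(hh' y).deriv]
      rw [interior_Ici] at hy
      exact hgnn y (le_of_lt hy)
  have hh0 : h 0 = 0 := by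
    have : D 0 = 1 := by simp [hDdef]
    simp [hhdef, this]
  have := hhmono (Set.self_mem_Ici) (Set.mem_Ici.mpr hx) hx
  rw [hh0] at this
  have hlog : Real.log (D x) ≤ x^2/8 := by simp only [hhdef] at this; linarith
  exact (Real.log_le_iff_le_exp (hDpos x)).mp hlog

/-- (Proposition 1 of the paper.) If `2t−1 > (n−1)p + √((n−1)log(n−1))`,
then `P(Binomial(n−1, p) ≥ 2t−1) ≤ 1/(n−1)²`. -/
theorem unmasking_attack_prob_le (n : ℕ) (hn : 2 ≤ n) (p : ℝ)
    (hp : p ∈ Set.Icc (0:ℝ) 1) (t : ℕ) (ht : 1 ≤ t)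
    (htp : ((n:ℝ)-1) * p + Real.sqrt (((n:ℝ)-1) * Real.log ((n:ℝ)-1))
      < 2 * (t:ℝ) - 1) :
    ∑ k ∈ Finset.Icc (2*t-1) (n-1),
      ((n-1).choose k : ℝ) * p ^ k * (1-p) ^ (n-1-k)
      ≤ 1 / ((n:ℝ)-1) ^ 2 := by
  obtain ⟨hp0, hp1⟩ := hp
  have hq0 : (0:ℝ) ≤ 1 - p := by linarith
  set m : ℕ := n - 1 with hmdef
  set s : ℕ := 2*t - 1 with hsdef
  have hm1 : 1 ≤ m := by omega
  have hmcast : ((m:ℕ):ℝ) = (n:ℝ) - 1 := by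
    rw [hmdef, Nat.cast_sub (by omega : 1 ≤ n), Nat.cast_one]
  have hscast : ((s:ℕ):ℝ) = 2*(t:ℝ) - 1 := by
    rw [hsdef, Nat.cast_sub (by omega : 1 ≤ 2*t)]
    push_cast; ring
  have hmR : (1:ℝ) ≤ (m:ℝ) := by exact_mod_cast hm1
  have hmpos : (0:ℝ) < (m:ℝ) := by linarith
  set δ : ℝ := (2*(t:ℝ) - 1) - (m:ℝ)*p with hδdef
  have hδ : Real.sqrt ((m:ℝ) * Real.log (m:ℝ)) < δ := by
    rw [hmcast]; rw [hmcast] at hδdef; rw [hδdef]; linarith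
  have hδpos : 0 < δ := lt_of_le_of_lt (Real.sqrt_nonneg _) hδ
  have hδ2 : (m:ℝ) * Real.log (m:ℝ) < δ^2 := by
    have hnn : 0 ≤ (m:ℝ) * Real.log (m:ℝ) :=
      mul_nonneg hmpos.le (Real.log_nonneg hmR)
    calc (m:ℝ) * Real.log (m:ℝ) = (Real.sqrt ((m:ℝ) * Real.log (m:ℝ)))^2 :=
          (Real.sq_sqrt hnn).symm
      _ < δ^2 := by
          apply pow_lt_pow_left₀ hδ (Real.sqrt_nonneg _) two_ne_zero
  set lam : ℝ := 4*δ/(m:ℝ) with hlamdef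
  have hlam : 0 < lam := div_pos (by linarith) hmpos
  have hbase : (0:ℝ) ≤ p * Real.exp lam + (1-p) := by positivity
  calc ∑ k ∈ Finset.Icc s m, ((m.choose k:ℝ) * p^k * (1-p)^(m-k))
      ≤ ∑ k ∈ Finset.Icc s m,
          (((m.choose k:ℝ) * (p*Real.exp lam)^k * (1-p)^(m-k)) * Real.exp (-(lam*(s:ℝ)))) := by
        apply Finset.sum_le_sum
        intro k hk
        rw [Finset.mem_Icc] at hk
        have hks : ((s:ℕ):ℝ) ≤ (k:ℝ) := by exact_mod_cast hk.1
        have key : (1:ℝ) ≤ Real.exp ((k:ℝ)*lam - lam*(s:ℝ)) :=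
          Real.one_le_exp (by nlinarith)
        have hrw : ((m.choose k:ℝ) * (p*Real.exp lam)^k * (1-p)^(m-k)) * Real.exp (-(lam*(s:ℝ)))
            = ((m.choose k:ℝ) * p^k * (1-p)^(m-k)) * Real.exp ((k:ℝ)*lam - lam*(s:ℝ)) := by
          rw [mul_pow, ← Real.exp_nat_mul,
            show (k:ℝ)*lam - lam*(s:ℝ) = (k:ℝ)*lam + -(lam*(s:ℝ)) by ring, Real.exp_add]
          ring
        rw [hrw]
        have hnn : (0:ℝ) ≤ (m.choose k:ℝ) * p^k * (1-p)^(m-k) := by positivity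
        nlinarith
    _ ≤ ∑ k ∈ Finset.range (m+1),
          (((m.choose k:ℝ) * (p*Real.exp lam)^k * (1-p)^(m-k)) * Real.exp (-(lam*(s:ℝ)))) := by
        apply Finset.sum_le_sum_of_subset_of_nonneg
        · intro k hk
          rw [Finset.mem_Icc] at hk
          exact Finset.mem_range.mpr (by omega)
        · intro k _ _
          have : (0:ℝ) ≤ p * Real.exp lam := by positivity
          positivity
    _ = (p*Real.exp lam + (1-p))^m * Real.exp (-(lam*(s:ℝ))) := by
        rw [← Finset.sum_mul, add_pow]
        congr 1
        apply Finset.sum_congr rfl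
        intro k _
        ring
    _ ≤ (Real.exp (lam^2/8 + lam*p))^m * Real.exp (-(lam*(s:ℝ))) := by
        apply mul_le_mul_of_nonneg_right _ (Real.exp_pos _).le
        apply pow_le_pow_left₀ hbase _ m
        have hb := bern_mgf_le p hp0 hp1 lam hlam.le
        have e1 : Real.exp (lam*p) * Real.exp ((1-p)*lam) = Real.exp lam := by
          rw [← Real.exp_add, show lam*p + (1-p)*lam = lam by ring]
        have e2 : Real.exp (lam*p) * Real.exp (-(p*lam)) = 1 := by
          rw [← Real.exp_add, show lam*p + -(p*lam) = 0 by ring, Real.exp_zero]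
        have hid : p*Real.exp lam + (1-p)
            = Real.exp (lam*p) * (p*Real.exp ((1-p)*lam) + (1-p)*Real.exp (-(p*lam))) := by
          linear_combination p * e1.symm + (1-p) * e2.symm
        rw [hid]
        calc Real.exp (lam*p) * (p*Real.exp ((1-p)*lam) + (1-p)*Real.exp (-(p*lam)))
            ≤ Real.exp (lam*p) * Real.exp (lam^2/8) :=
              mul_le_mul_of_nonneg_left hb (Real.exp_pos _).le
          _ = Real.exp (lam^2/8 + lam*p) := by
              rw [← Real.exp_add, add_comm]
    _ = Real.exp ((m:ℝ)*(lam^2/8 + lam*p) - lam*(s:ℝ)) := by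
        rw [← Real.exp_nat_mul, ← Real.exp_add]
        ring_nf
    _ ≤ Real.exp (-(2 * Real.log (m:ℝ))) := by
        apply Real.exp_le_exp.mpr
        have hs : ((s:ℕ):ℝ) = (m:ℝ)*p + δ := by rw [hscast, hδdef]; ring
        rw [hs]
        have hexpr : (m:ℝ)*(lam^2/8 + lam*p) - lam*((m:ℝ)*p + δ) = -2*δ^2/(m:ℝ) := by
          rw [hlamdef]; field_simp; ring
        rw [hexpr]
        rw [div_le_iff₀ hmpos]
        nlinarith
    _ = 1/((m:ℝ))^2 := by
        have hexp2 : Real.exp (2*Real.log ((m:ℝ))) = ((m:ℝ))^2 := by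
          rw [show (2:ℝ)*Real.log (m:ℝ) = Real.log (((m:ℝ))^2) by
            rw [Real.log_pow]; push_cast; ring]
          exact Real.exp_log (by positivity)
        rw [Real.exp_neg, hexp2, one_div]
    _ = 1/((n:ℝ)-1)^2 := by rw [hmcast]
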